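/- Assume s < 0 and let q = 1_{B₁} + 1_{B₂} − 2·1_{B₃} ∈ ℝ^V. Then for every i ∈ V: if i ∈ B₁ then ⟨q, y_i⟩ = n(i, B₁) − s > 0; if i ∈ B₂ then ⟨q, y_i⟩ = n(i, B₂) − s > 0; if i ∈ B₃ then ⟨q, y_i⟩ = 2·(s − n(i, B₃)) < 0; and if i ∈ C then ⟨q, y_i⟩ = 0. -/

import Mathlib

open scoped RealInnerProductSpace

/-- The `i`-th column of `y = A - s·I`, where `A` is the real adjacency matrix of `G`,
viewed as a point of Euclidean space `ℝ^V`. -/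
noncomputable def srgCol {V : Type*} [Fintype V] [DecidableEq V]
    (G : SimpleGraph V) [DecidableRel G.Adj] (s : ℝ) (i : V) : EuclideanSpace ℝ V :=
  (WithLp.equiv 2 (V → ℝ)).symm fun j => (G.adjMatrix ℝ - s • (1 : Matrix V V ℝ)) j i


/-- The affine dimension of a point set: the finrank of the direction of its affine span. -/
noncomputable def adim {V : Type*} [Fintype V] (X : Set (EuclideanSpace ℝ V)) : ℕ :=
  Module.finrank ℝ (affineSpan ℝ X).direction


/-- `nN G i U` is the number of neighbours of `i` lying in `U`. -/
noncomputable def nN {V : Type*} (G : SimpleGraph V) (i : V) (U : Set V) : ℕ :=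
  {j ∈ U | G.Adj i j}.ncard


open scoped Classical in
private lemma srg_key {V : Type*} [Fintype V] [DecidableEq V]
    (G : SimpleGraph V) [DecidableRel G.Adj] (s : ℝ) (U : Set V) (i : V) :
    ∑ j, U.indicator (1 : V → ℝ) j * ((G.adjMatrix ℝ - s • (1 : Matrix V V ℝ)) j i)
      = (nN G i U : ℝ) - s * (if i ∈ U then 1 else 0) := by
  classical
  have h1 : ∑ j, U.indicator (1 : V → ℝ) j * (G.adjMatrix ℝ) j i = (nN G i U : ℝ) := by
    rw [nN, Set.ncard_eq_toFinset_card', Set.toFinset_setOf]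
    rw [Finset.card_filter]
    push_cast
    apply Finset.sum_congr rfl
    intro j _
    by_cases hj : j ∈ U <;> by_cases ha : G.Adj i j
    · simp [hj, ha, ha.symm, Set.indicator_apply]
    · simp only [Set.indicator_apply, hj, if_true, Pi.one_apply, one_mul,
        SimpleGraph.adjMatrix_apply, if_pos hj, true_and]
      rw [if_neg ha, if_neg (fun h => ha h.symm)]
    · simp [hj, Set.indicator_apply]
    · simp [hj, Set.indicator_apply]
  have h2 : ∑ j, U.indicator (1 : V → ℝ) j * ((s • (1 : Matrix V V ℝ)) j i)
      = s * (if i ∈ U then 1 else 0) := by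
    rw [Finset.sum_eq_single i]
    · by_cases hi : i ∈ U <;> simp [hi, Matrix.smul_apply, Matrix.one_apply, mul_comm]
    · intro j _ hj
      simp [Matrix.smul_apply, Matrix.one_apply, hj]
    · simp
  calc ∑ j, U.indicator (1 : V → ℝ) j * ((G.adjMatrix ℝ - s • (1 : Matrix V V ℝ)) j i)
      = ∑ j, (U.indicator (1 : V → ℝ) j * (G.adjMatrix ℝ) j i
          - U.indicator (1 : V → ℝ) j * ((s • (1 : Matrix V V ℝ)) j i)) := by
        apply Finset.sum_congr rfl; intro j _; rw [Matrix.sub_apply]; ring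
    _ = (nN G i U : ℝ) - s * (if i ∈ U then 1 else 0) := by
        rw [Finset.sum_sub_distrib, h1, h2]

private lemma nN_zero {V : Type*} (G : SimpleGraph V) (i : V) (U : Set V)
    (h : ∀ j ∈ U, ¬G.Adj i j) : nN G i U = 0 := by
  rw [nN]
  convert Set.ncard_empty V
  ext j
  simp only [Set.mem_setOf_eq, Set.mem_empty_iff_false, iff_false, not_and]
  exact h j

theorem stmt_10 {V : Type*} [Fintype V] [DecidableEq V]
    (G : SimpleGraph V) [DecidableRel G.Adj] (v k l m : ℕ)
    (hG : G.IsSRGWith v k l m) (s : ℝ) (hs : s < 0)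
    (B₁ B₂ B₃ C : Set V)
    (hcover : B₁ ∪ B₂ ∪ B₃ ∪ C = Set.univ)
    (hd₁₂ : Disjoint B₁ B₂) (hd₁₃ : Disjoint B₁ B₃) (hd₁C : Disjoint B₁ C)
    (hd₂₃ : Disjoint B₂ B₃) (hd₂C : Disjoint B₂ C) (hd₃C : Disjoint B₃ C)
    (hB₁₂ : ∀ i ∈ B₁, ∀ j ∈ B₂, ¬G.Adj i j)
    (hB₁₃ : ∀ i ∈ B₁, ∀ j ∈ B₃, ¬G.Adj i j)
    (hB₂₃ : ∀ i ∈ B₂, ∀ j ∈ B₃, ¬G.Adj i j)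
    (hC : ∀ i ∈ C, nN G i B₁ = nN G i B₂ ∧ nN G i B₂ = nN G i B₃)
    (q : EuclideanSpace ℝ V)
    (hq : q = (WithLp.equiv 2 (V → ℝ)).symm
      (B₁.indicator 1 + B₂.indicator 1 - (2 : ℝ) • B₃.indicator 1))
    (i : V) :
    (i ∈ B₁ → ⟪q, srgCol G s i⟫ = (nN G i B₁ : ℝ) - s ∧ 0 < ⟪q, srgCol G s i⟫) ∧
    (i ∈ B₂ → ⟪q, srgCol G s i⟫ = (nN G i B₂ : ℝ) - s ∧ 0 < ⟪q, srgCol G s i⟫) ∧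
    (i ∈ B₃ → ⟪q, srgCol G s i⟫ = 2 * (s - (nN G i B₃ : ℝ)) ∧ ⟪q, srgCol G s i⟫ < 0) ∧
    (i ∈ C → ⟪q, srgCol G s i⟫ = 0) := by
  classical
  have hmain : ⟪q, srgCol G s i⟫
      = ((nN G i B₁ : ℝ) - s * (if i ∈ B₁ then 1 else 0))
        + ((nN G i B₂ : ℝ) - s * (if i ∈ B₂ then 1 else 0))
        - 2 * ((nN G i B₃ : ℝ) - s * (if i ∈ B₃ then 1 else 0)) := by
    rw [← srg_key G s B₁ i, ← srg_key G s B₂ i, ← srg_key G s B₃ i]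
    rw [hq, srgCol, PiLp.inner_apply]
    simp only [WithLp.equiv_symm_apply, WithLp.ofLp_toLp, RCLike.inner_apply, conj_trivial,
      Pi.add_apply, Pi.sub_apply, Pi.smul_apply, smul_eq_mul]
    rw [← Finset.sum_add_distrib, Finset.mul_sum, ← Finset.sum_sub_distrib]
    apply Finset.sum_congr rfl
    intro j _
    ring
  refine ⟨fun hi => ?_, fun hi => ?_, fun hi => ?_, fun hi => ?_⟩
  · have h2 : nN G i B₂ = 0 := nN_zero G i B₂ (fun j hj => hB₁₂ i hi j hj)
    have h3 : nN G i B₃ = 0 := nN_zero G i B₃ (fun j hj => hB₁₃ i hi j hj)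
    have e : ⟪q, srgCol G s i⟫ = (nN G i B₁ : ℝ) - s := by
      rw [hmain, h2, h3, if_pos hi, if_neg (Set.disjoint_left.mp hd₁₂ hi),
        if_neg (Set.disjoint_left.mp hd₁₃ hi)]
      push_cast
      ring
    exact ⟨e, by rw [e]; have := (nN G i B₁).cast_nonneg (α := ℝ); linarith⟩
  · have h1 : nN G i B₁ = 0 :=
      nN_zero G i B₁ (fun j hj ha => hB₁₂ j hj i hi ha.symm)
    have h3 : nN G i B₃ = 0 := nN_zero G i B₃ (fun j hj => hB₂₃ i hi j hj)
    have e : ⟪q, srgCol G s i⟫ = (nN G i B₂ : ℝ) - s := by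
      rw [hmain, h1, h3, if_pos hi, if_neg (Set.disjoint_right.mp hd₁₂ hi),
        if_neg (Set.disjoint_left.mp hd₂₃ hi)]
      push_cast
      ring
    exact ⟨e, by rw [e]; have := (nN G i B₂).cast_nonneg (α := ℝ); linarith⟩
  · have h1 : nN G i B₁ = 0 :=
      nN_zero G i B₁ (fun j hj ha => hB₁₃ j hj i hi ha.symm)
    have h2 : nN G i B₂ = 0 :=
      nN_zero G i B₂ (fun j hj ha => hB₂₃ j hj i hi ha.symm)
    have e : ⟪q, srgCol G s i⟫ = 2 * (s - (nN G i B₃ : ℝ)) := by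
      rw [hmain, h1, h2, if_pos hi, if_neg (Set.disjoint_right.mp hd₁₃ hi),
        if_neg (Set.disjoint_right.mp hd₂₃ hi)]
      push_cast
      ring
    refine ⟨e, ?_⟩
    rw [e]
    have := (nN G i B₃).cast_nonneg (α := ℝ)
    linarith
  · obtain ⟨h12, h23⟩ := hC i hi
    rw [hmain, if_neg (Set.disjoint_right.mp hd₁C hi), if_neg (Set.disjoint_right.mp hd₂C hi),
      if_neg (Set.disjoint_right.mp hd₃C hi), h12, h23]
    ring
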